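/- Let f : ℝ → ℝ be continuously differentiable with compact support, and let (Δ_n) be a sequence of positive reals with Δ_n → 0. Then Σ_{k ∈ ℤ} [ ( f((k+1)Δ_n) − f((k−1)Δ_n) ) / (2Δ_n) ]² · Δ_n converges to ∫_{−∞}^{∞} (f′(y))² dy as n → ∞. (For each n the sum has only finitely many nonzero terms since f has compact support.) -/

import Mathlib

open Filter Topology MeasureTheory

set_option maxHeartbeats 1000000 in
private lemma central_diff_aux (f g : ℝ → ℝ)
    (hd : ∀ x : ℝ, HasDerivAt f (g x) x) (hgc : Continuous g)
    (M R δ ε' : ℝ) (hM : ∀ x, |g x| ≤ M) (hR1 : 1 ≤ R)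
    (hf0 : ∀ x : ℝ, R < |x| → f x = 0) (hg0 : ∀ x : ℝ, R < |x| → g x = 0)
    (hε' : 0 < ε') (hδmod : ∀ a b : ℝ, |a - b| < δ → |g a - g b| < ε')
    (D : ℝ) (hD : 0 < D) (hD1 : D ≤ 1) (hDδ : 2 * D < δ) :
    |(∑' k : ℤ, ((f (((k : ℝ) + 1) * D) - f (((k : ℝ) - 1) * D)) / (2 * D)) ^ 2 * D)
      - ∫ y : ℝ, g y ^ 2| ≤ (2 * M + 1) * (2 * R + 5) * ε' := by
  have hM0 : 0 ≤ M := (abs_nonneg _).trans (hM 0)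
  set a : ℤ → ℝ := fun k => (f (((k : ℝ) + 1) * D) - f (((k : ℝ) - 1) * D)) / (2 * D) with ha
  have hint : ∀ c d : ℝ, IntervalIntegrable g volume c d := fun c d =>
    hgc.intervalIntegrable c d
  have hintsq : ∀ c d : ℝ, IntervalIntegrable (fun y => g y ^ 2) volume c d := fun c d =>
    (hgc.pow 2).intervalIntegrable c d
  have hFTC : ∀ k : ℤ, f (((k : ℝ) + 1) * D) - f (((k : ℝ) - 1) * D)
      = ∫ t in (((k : ℝ) - 1) * D)..(((k : ℝ) + 1) * D), g t := fun k =>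
    (intervalIntegral.integral_eq_sub_of_hasDerivAt (fun x _ => hd x) (hint _ _)).symm
  have h2D : (0:ℝ) < 2 * D := by linarith
  have hlen : ∀ k : ℤ, ((k : ℝ) + 1) * D - ((k : ℝ) - 1) * D = 2 * D := fun k => by ring
  -- bound on a
  have haM : ∀ k : ℤ, |a k| ≤ M := by
    intro k
    have h1 : ‖∫ t in (((k : ℝ) - 1) * D)..(((k : ℝ) + 1) * D), g t‖
        ≤ M * |((k : ℝ) + 1) * D - ((k : ℝ) - 1) * D| :=
      intervalIntegral.norm_integral_le_of_norm_le_const (fun x _ => by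
        rw [Real.norm_eq_abs]; exact hM x)
    rw [Real.norm_eq_abs, hlen k, abs_of_pos h2D] at h1
    rw [ha]
    simp only [hFTC k]
    rw [abs_div, abs_of_pos h2D, div_le_iff₀ h2D]
    calc |∫ t in (((k : ℝ) - 1) * D)..(((k : ℝ) + 1) * D), g t| ≤ M * (2 * D) := h1
      _ = M * (2 * D) := rfl
  -- closeness of a k to g y
  have hclose : ∀ k : ℤ, ∀ y ∈ Set.Icc ((k : ℝ) * D) (((k : ℝ) + 1) * D), |a k - g y| ≤ ε' := by
    intro k y hy
    have hcd : ((k : ℝ) - 1) * D ≤ ((k : ℝ) + 1) * D := by nlinarith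
    have h1 : a k - g y
        = (∫ t in (((k : ℝ) - 1) * D)..(((k : ℝ) + 1) * D), (g t - g y)) / (2 * D) := by
      rw [intervalIntegral.integral_sub (hint _ _) intervalIntegrable_const,
        intervalIntegral.integral_const, smul_eq_mul, hlen k]
      rw [ha]
      simp only [hFTC k]
      field_simp
    have h2 : ∀ t ∈ Set.uIoc (((k : ℝ) - 1) * D) (((k : ℝ) + 1) * D), ‖g t - g y‖ ≤ ε' := by
      intro t ht
      rw [Set.uIoc_of_le hcd] at ht
      have habs : |t - y| < δ := by
        rw [abs_sub_lt_iff]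
        constructor <;> nlinarith [hy.1, hy.2, ht.1, ht.2]
      rw [Real.norm_eq_abs]
      exact (hδmod t y habs).le
    have h3 := intervalIntegral.norm_integral_le_of_norm_le_const h2
    rw [Real.norm_eq_abs, hlen k, abs_of_pos h2D] at h3
    rw [h1, abs_div, abs_of_pos h2D, div_le_iff₀ h2D]
    calc |∫ t in (((k : ℝ) - 1) * D)..(((k : ℝ) + 1) * D), (g t - g y)| ≤ ε' * (2 * D) := h3
      _ = ε' * (2 * D) := rfl
  set b : ℤ → ℝ := fun k => ∫ y in ((k : ℝ) * D)..(((k : ℝ) + 1) * D), g y ^ 2 with hb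
  have hkD : ∀ k : ℤ, (k : ℝ) * D ≤ ((k : ℝ) + 1) * D := fun k => by nlinarith
  -- term vs b
  have htb : ∀ k : ℤ, |a k ^ 2 * D - b k| ≤ (2 * M + 1) * ε' * D := by
    intro k
    have h0 : a k ^ 2 * D = ∫ _ in ((k : ℝ) * D)..(((k : ℝ) + 1) * D), a k ^ 2 := by
      rw [intervalIntegral.integral_const, smul_eq_mul]; ring
    rw [h0, hb, ← intervalIntegral.integral_sub intervalIntegrable_const (hintsq _ _)]
    have h2 : ∀ y ∈ Set.uIoc ((k : ℝ) * D) (((k : ℝ) + 1) * D), ‖a k ^ 2 - g y ^ 2‖ ≤ (2 * M + 1) * ε' := by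
      intro y hy
      rw [Set.uIoc_of_le (hkD k)] at hy
      have hy' : y ∈ Set.Icc ((k : ℝ) * D) (((k : ℝ) + 1) * D) := ⟨hy.1.le, hy.2⟩
      have e1 := hclose k y hy'
      have e2 : |a k + g y| ≤ 2 * M + 1 := by
        have h4 := haM k; have h5 := hM y
        calc |a k + g y| ≤ |a k| + |g y| := abs_add_le _ _
          _ ≤ 2 * M + 1 := by linarith
      rw [Real.norm_eq_abs,
        show a k ^ 2 - g y ^ 2 = (a k - g y) * (a k + g y) by ring, abs_mul]
      calc |a k - g y| * |a k + g y| ≤ ε' * (2 * M + 1) :=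
            mul_le_mul e1 e2 (abs_nonneg _) hε'.le
        _ = (2 * M + 1) * ε' := by ring
    have h3 := intervalIntegral.norm_integral_le_of_norm_le_const h2
    rw [Real.norm_eq_abs, show ((k : ℝ) + 1) * D - (k : ℝ) * D = D by ring,
      abs_of_pos hD] at h3
    exact h3
  -- choice of N
  set N : ℕ := ⌈R / D⌉₊ + 1 with hN
  have hc : R ≤ (⌈R / D⌉₊ : ℝ) * D := (div_le_iff₀ hD).1 (Nat.le_ceil _)
  have hND : R + D ≤ (N : ℝ) * D := by
    rw [hN]; push_cast; nlinarith
  have hNup : (N : ℝ) * D ≤ R + 2 * D := by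
    have h := Nat.ceil_lt_add_one (by positivity : (0:ℝ) ≤ R / D)
    have h' : R / D * D = R := div_mul_cancel₀ R hD.ne'
    rw [hN]; push_cast; nlinarith
  -- vanishing of terms outside Icc
  have hfz : ∀ j : ℤ, ((N : ℤ) ≤ j ∨ j ≤ -(N : ℤ)) → f ((j : ℝ) * D) = 0 := by
    intro j hj
    apply hf0
    rcases hj with hj | hj
    · have : (N : ℝ) ≤ (j : ℝ) := by exact_mod_cast hj
      rw [abs_of_pos (by nlinarith : (0:ℝ) < (j : ℝ) * D)]
      nlinarith
    · have : (j : ℝ) ≤ -(N : ℝ) := by exact_mod_cast hj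
      rw [abs_of_neg (by nlinarith : (j : ℝ) * D < 0)]
      nlinarith
  have hterm0 : ∀ k : ℤ, k ∉ Finset.Icc (-(N : ℤ)) (N : ℤ) → a k ^ 2 * D = 0 := by
    intro k hk
    rw [Finset.mem_Icc, not_and_or, not_le, not_le] at hk
    have h1 : f (((k : ℝ) + 1) * D) = 0 := by
      have h := hfz (k + 1) (by omega)
      rwa [show ((k + 1 : ℤ) : ℝ) = (k : ℝ) + 1 by push_cast; ring] at h
    have h2 : f (((k : ℝ) - 1) * D) = 0 := by
      have h := hfz (k - 1) (by omega)
      rwa [show ((k - 1 : ℤ) : ℝ) = (k : ℝ) - 1 by push_cast; ring] at h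
    rw [ha]
    simp [h1, h2]
  have hb0 : ∀ k : ℤ, k ∉ Finset.Icc (-(N : ℤ)) (N : ℤ) → b k = 0 := by
    intro k hk
    rw [Finset.mem_Icc, not_and_or, not_le, not_le] at hk
    have hzero : Set.EqOn (fun y => g y ^ 2) (fun _ => (0:ℝ))
        (Set.uIcc ((k : ℝ) * D) (((k : ℝ) + 1) * D)) := by
      intro y hy
      rw [Set.uIcc_of_le (hkD k)] at hy
      have hgy : g y = 0 := by
        apply hg0
        rcases hk with hk | hk
        · have hk' : (k : ℝ) ≤ -(N : ℝ) - 1 := by exact_mod_cast (by omega : k ≤ -(N:ℤ) - 1)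
          have : y ≤ ((k : ℝ) + 1) * D := hy.2
          rw [abs_of_neg (by nlinarith : y < 0)]
          nlinarith
        · have hk' : (N : ℝ) + 1 ≤ (k : ℝ) := by exact_mod_cast (by omega : (N:ℤ) + 1 ≤ k)
          have : (k : ℝ) * D ≤ y := hy.1
          rw [abs_of_pos (by nlinarith : 0 < y)]
          nlinarith
      simp [hgy]
    rw [hb]
    simp only
    rw [intervalIntegral.integral_congr hzero, intervalIntegral.integral_const, smul_zero]
  -- tsum equals finite sum
  have htsum : (∑' k : ℤ, a k ^ 2 * D) = ∑ k ∈ Finset.Icc (-(N : ℤ)) (N : ℤ), a k ^ 2 * D :=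
    tsum_eq_sum (fun k hk => hterm0 k hk)
  -- integral equals finite sum of b
  set aseq : ℕ → ℝ := fun i => ((i : ℝ) - (N : ℝ)) * D with haseq
  have hsupp2 : Function.support (fun y => g y ^ 2)
      ⊆ Set.Ioc (-(N : ℝ) * D) (((N : ℝ) + 1) * D) := by
    intro y hy
    have hgy : g y ≠ 0 := by
      intro h; apply hy; simp [h]
    have hyR : |y| ≤ R := le_of_not_gt fun h => hgy (hg0 y h)
    rw [abs_le] at hyR
    exact ⟨by nlinarith [hyR.1], by nlinarith [hyR.2]⟩
  have hIeq : (∫ y : ℝ, g y ^ 2) = ∫ y in (-(N : ℝ) * D)..(((N : ℝ) + 1) * D), g y ^ 2 :=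
    (intervalIntegral.integral_eq_integral_of_support_subset hsupp2).symm
  have hadj : ∑ i ∈ Finset.range (2 * N + 1), ∫ y in (aseq i)..(aseq (i + 1)), g y ^ 2
      = ∫ y in (aseq 0)..(aseq (2 * N + 1)), g y ^ 2 :=
    intervalIntegral.sum_integral_adjacent_intervals (fun i _ => hintsq _ _)
  have ha0 : aseq 0 = -(N : ℝ) * D := by rw [haseq]; push_cast; ring
  have haL : aseq (2 * N + 1) = ((N : ℝ) + 1) * D := by rw [haseq]; push_cast; ring
  have hmapset : (Finset.range (2 * N + 1)).map
      ⟨fun i : ℕ => (i : ℤ) - (N : ℤ), fun a b h => by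
        simp only [sub_left_inj, Int.natCast_inj] at h; exact h⟩ = Finset.Icc (-(N : ℤ)) (N : ℤ) := by
    ext k
    simp only [Finset.mem_map, Finset.mem_range, Finset.mem_Icc, Function.Embedding.coeFn_mk]
    constructor
    · rintro ⟨i, hi, rfl⟩; change -(N:ℤ) ≤ (i:ℤ) - N ∧ (i:ℤ) - N ≤ N; omega
    · intro hk; exact ⟨(k + N).toNat, by omega, by change ((k + N).toNat : ℤ) - N = k; omega⟩
  have hsumb : ∑ k ∈ Finset.Icc (-(N : ℤ)) (N : ℤ), b k
      = ∑ i ∈ Finset.range (2 * N + 1), ∫ y in (aseq i)..(aseq (i + 1)), g y ^ 2 := by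
    rw [← hmapset, Finset.sum_map]
    apply Finset.sum_congr rfl
    intro i _
    rw [hb, haseq]
    simp only [Function.Embedding.coeFn_mk]
    change ∫ y in ((((i:ℤ) - N : ℤ) : ℝ) * D)..(((((i:ℤ) - N : ℤ) : ℝ) + 1) * D), g y ^ 2 = _
    congr 1 <;> push_cast <;> ring
  have hI : (∫ y : ℝ, g y ^ 2) = ∑ k ∈ Finset.Icc (-(N : ℤ)) (N : ℤ), b k := by
    rw [hsumb, hadj, ha0, haL, hIeq]
  have hcard : (Finset.Icc (-(N : ℤ)) (N : ℤ)).card = 2 * N + 1 := by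
    rw [Int.card_Icc]; omega
  calc |(∑' k : ℤ, a k ^ 2 * D) - ∫ y : ℝ, g y ^ 2|
      = |∑ k ∈ Finset.Icc (-(N : ℤ)) (N : ℤ), (a k ^ 2 * D - b k)| := by
        rw [htsum, hI, Finset.sum_sub_distrib]
    _ ≤ ∑ k ∈ Finset.Icc (-(N : ℤ)) (N : ℤ), |a k ^ 2 * D - b k| :=
        Finset.abs_sum_le_sum_abs _ _
    _ ≤ ∑ _k ∈ Finset.Icc (-(N : ℤ)) (N : ℤ), (2 * M + 1) * ε' * D :=
        Finset.sum_le_sum (fun k _ => htb k)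
    _ = ((2 * N + 1 : ℕ) : ℝ) * ((2 * M + 1) * ε' * D) := by
        rw [Finset.sum_const, hcard, nsmul_eq_mul]
    _ = (2 * M + 1) * ε' * (((2 * N + 1 : ℕ) : ℝ) * D) := by ring
    _ ≤ (2 * M + 1) * ε' * (2 * R + 5) := by
        refine mul_le_mul_of_nonneg_left ?_ (mul_nonneg (by linarith) hε'.le)
        have hcast : ((2 * N + 1 : ℕ) : ℝ) * D = 2 * ((N : ℝ) * D) + D := by push_cast; ring
        rw [hcast]
        linarith [hNup, hD1]
    _ = (2 * M + 1) * (2 * R + 5) * ε' := by ring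

/-- Riemann-sum convergence of squared central differences: for `f ∈ C¹` with compact
support and mesh sizes `Δₙ → 0⁺`,
`Σ_k [(f((k+1)Δₙ) - f((k-1)Δₙ))/(2Δₙ)]² Δₙ → ∫ (f')²`. -/
theorem squared_central_difference_tendsto
    (f : ℝ → ℝ) (hf : ContDiff ℝ 1 f) (hsupp : HasCompactSupport f)
    (Δ : ℕ → ℝ) (hΔpos : ∀ n, 0 < Δ n) (hΔ0 : Tendsto Δ atTop (𝓝 0)) :
    Tendsto (fun n => ∑' k : ℤ,
        ((f (((k : ℝ) + 1) * Δ n) - f (((k : ℝ) - 1) * Δ n)) / (2 * Δ n)) ^ 2 * Δ n)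
      atTop (𝓝 (∫ y : ℝ, (deriv f y) ^ 2)) := by
  have hgc : Continuous (deriv f) := hf.continuous_deriv le_rfl
  have hgs : HasCompactSupport (deriv f) := hsupp.deriv
  have hd : ∀ x : ℝ, HasDerivAt f (deriv f x) x := fun x =>
    ((hf.differentiable one_ne_zero) x).hasDerivAt
  obtain ⟨M, hM⟩ := hgs.exists_bound_of_continuous hgc
  have hM' : ∀ x, |deriv f x| ≤ M := fun x => by
    have := hM x; rwa [Real.norm_eq_abs] at this
  have hM0 : 0 ≤ M := (abs_nonneg _).trans (hM' 0)
  obtain ⟨R0, hR0⟩ := hsupp.isBounded.subset_closedBall 0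
  set R := max R0 1 with hRdef
  have hR1 : (1:ℝ) ≤ R := le_max_right _ _
  have hmem : ∀ x : ℝ, R < |x| → x ∉ tsupport f := by
    intro x hx hxs
    have h1 := hR0 hxs
    rw [Metric.mem_closedBall, Real.dist_eq, sub_zero] at h1
    have : |x| ≤ R := h1.trans (le_max_left _ _)
    linarith
  have hf0 : ∀ x : ℝ, R < |x| → f x = 0 := fun x hx =>
    image_eq_zero_of_notMem_tsupport (hmem x hx)
  have hg0 : ∀ x : ℝ, R < |x| → deriv f x = 0 := by
    intro x hx
    by_contra h
    exact hmem x hx (support_deriv_subset (by simpa [Function.mem_support] using h))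
  have hguc : UniformContinuous (deriv f) :=
    hgc.uniformContinuous_of_tendsto_cocompact hgs.is_zero_at_infty
  rw [Metric.tendsto_atTop]
  intro ε hε
  set C := (2 * M + 1) * (2 * R + 5) with hC
  have hCpos : 0 < C := by rw [hC]; nlinarith
  set ε' := ε / (2 * C) with hε'def
  have hε' : 0 < ε' := by rw [hε'def]; positivity
  obtain ⟨δ, hδ0, hδ⟩ := Metric.uniformContinuous_iff.1 hguc ε' hε'
  have hδmod : ∀ a b : ℝ, |a - b| < δ → |deriv f a - deriv f b| < ε' := by
    intro a b hab
    have := hδ (show dist a b < δ by rwa [Real.dist_eq])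
    rwa [Real.dist_eq] at this
  have hev : ∀ᶠ n in atTop, Δ n < min (δ / 2) 1 :=
    hΔ0.eventually (gt_mem_nhds (by positivity : (0:ℝ) < min (δ / 2) 1))
  obtain ⟨n₀, hn₀⟩ := eventually_atTop.1 hev
  refine ⟨n₀, fun n hn => ?_⟩
  have hsmall := hn₀ n hn
  have hD1 : Δ n ≤ 1 := (lt_of_lt_of_le hsmall (min_le_right _ _)).le
  have hDδ : 2 * Δ n < δ := by
    have := lt_of_lt_of_le hsmall (min_le_left _ _)
    linarith
  have hkey := central_diff_aux f (deriv f) hd hgc M R δ ε' hM' hR1 hf0 hg0 hε' hδmod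
    (Δ n) (hΔpos n) hD1 hDδ
  rw [Real.dist_eq]
  calc |(∑' k : ℤ,
        ((f (((k : ℝ) + 1) * Δ n) - f (((k : ℝ) - 1) * Δ n)) / (2 * Δ n)) ^ 2 * Δ n)
      - ∫ y : ℝ, (deriv f y) ^ 2| ≤ C * ε' := by rw [hC]; exact hkey
    _ = ε / 2 := by rw [hε'def]; field_simp
    _ < ε := by linarith
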